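/- arXiv:1407.1153 — 3 statements merged into one kernel-verified Lean document; each statement's English description precedes it below -/
import Mathlib

section
/- For K, L ∈ K_u^p(S^n), the Euclidean Hausdorff distance between the gnomonic projections satisfies δ(g_u(K), g_u(L)) = max_{v ∈ S_u} |tan h_u(K,v) − tan h_u(L,v)|. -/
open scoped RealInnerProductSpace Pointwise
open Real

noncomputable section

/-- `Esp n` is the ambient Euclidean space `ℝ^{n+1}` containing the unit sphere `S^n`. -/
abbrev Esp (n : ℕ) : Type := EuclideanSpace ℝ (Fin (n + 1))

/-- The unit sphere `S^n ⊆ ℝ^{n+1}`. -/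
def uSphere (n : ℕ) : Set (Esp n) := {x | ‖x‖ = 1}

/-- `rad A = {λ • x : λ ≥ 0, x ∈ A}`. -/
def radSet {n : ℕ} (A : Set (Esp n)) : Set (Esp n) :=
  {y | ∃ l : ℝ, 0 ≤ l ∧ ∃ x ∈ A, y = l • x}

/-- A set `A ⊆ S^n` is spherically convex if `rad A` is convex. -/
def SphConvex {n : ℕ} (A : Set (Esp n)) : Prop := Convex ℝ (radSet A)

/-- The open hemisphere centered at `u`. -/
def openHemi {n : ℕ} (u : Esp n) : Set (Esp n) := {v | ‖v‖ = 1 ∧ 0 < ⟪u, v⟫}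

/-- The equator `S_u = {v ∈ S^n : u ⬝ v = 0}`. -/
def equator {n : ℕ} (u : Esp n) : Set (Esp n) := {v | ‖v‖ = 1 ∧ ⟪u, v⟫ = 0}

/-- Proper convex bodies contained in the open hemisphere centered at `u`:
the class `K_u^p(S^n)`. -/
def properBodies {n : ℕ} (u : Esp n) : Set (Set (Esp n)) :=
  {K | K.Nonempty ∧ IsClosed K ∧ K ⊆ openHemi u ∧ SphConvex K}

/-- All proper convex bodies `K^p(S^n)`. -/
def allProperBodies (n : ℕ) : Set (Set (Esp n)) :=
  {K | ∃ u : Esp n, ‖u‖ = 1 ∧ K ∈ properBodies u}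

/-- The gnomonic projection `g_u(v) = v/(u⬝v) − u`. -/
def gno {n : ℕ} (u v : Esp n) : Esp n := (⟪u, v⟫)⁻¹ • v - u

/-- The inverse gnomonic projection `x ↦ (x+u)/‖x+u‖`. -/
def gnoInv {n : ℕ} (u x : Esp n) : Esp n := ‖x + u‖⁻¹ • (x + u)

/-- The hyperplane `ℝ^n_u = u^⊥` of `ℝ^{n+1}`. -/
def hyper {n : ℕ} (u : Esp n) : Set (Esp n) := {x | ⟪u, x⟫ = 0}

/-- The class `K(ℝ^n_u)` of (nonempty) compact convex subsets of the hyperplane `u^⊥`. -/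
def cptCvx {n : ℕ} (u : Esp n) : Set (Set (Esp n)) :=
  {C | C.Nonempty ∧ IsCompact C ∧ Convex ℝ C ∧ C ⊆ hyper u}

/-- The spherical support function `h_u(K,v) = max {sgn(v⬝w) d(u, w|S_{u,v}) : w ∈ K}`,
where `d(u, w|S_{u,v}) = arccos ((u⬝w)/√((u⬝w)² + (v⬝w)²))`. -/
def sphSupp {n : ℕ} (u : Esp n) (K : Set (Esp n)) (v : Esp n) : ℝ :=
  sSup ((fun w => Real.sign ⟪v, w⟫ *
    Real.arccos (⟪u, w⟫ / Real.sqrt (⟪u, w⟫ ^ 2 + ⟪v, w⟫ ^ 2))) '' K)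

/-- The Euclidean support function `h(C,x) = sup {x ⬝ y : y ∈ C}`. -/
def esupp {n : ℕ} (C : Set (Esp n)) (x : Esp n) : ℝ :=
  sSup ((fun y => ⟪x, y⟫) '' C)

/-- Spherical (geodesic) distance on `S^n`. -/
def sphDist {n : ℕ} (x y : Esp n) : ℝ := Real.arccos ⟪x, y⟫

/-- The Hausdorff distance `δ_s` induced by the spherical distance. -/
def sphHaus {n : ℕ} (A B : Set (Esp n)) : ℝ :=
  sInf {r | 0 ≤ r ∧ (∀ a ∈ A, ∃ b ∈ B, sphDist a b ≤ r) ∧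
    (∀ b ∈ B, ∃ a ∈ A, sphDist a b ≤ r)}

/-- The metric `γ_u(K,L) = max_{v ∈ S_u} |h_u(K,v) − h_u(L,v)|`. -/
def gammaU {n : ℕ} (u : Esp n) (K L : Set (Esp n)) : ℝ :=
  sSup ((fun v => |sphSupp u K v - sphSupp u L v|) '' equator u)

/-- Spherical projection of `K` onto the great subsphere `V ∩ S^n`:
`K|S = (rad K | V) ∩ S^n`. -/
def sphProj {n : ℕ} (V : Submodule ℝ (Esp n)) (K : Set (Esp n)) : Set (Esp n) :=
  ((fun x => (V.orthogonalProjectionOnto x : Esp n)) '' radSet K) ∩ uSphere n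

/-- Orthogonal projection of a subset of `ℝ^{n+1}` onto a linear subspace `W`. -/
def eProj {n : ℕ} (W : Submodule ℝ (Esp n)) (C : Set (Esp n)) : Set (Esp n) :=
  (fun x => (W.orthogonalProjectionOnto x : Esp n)) '' C

/-- The spherical convex hull: the intersection of all spherically convex subsets of `S^n`
containing `A`. -/
def sphHull {n : ℕ} (A : Set (Esp n)) : Set (Esp n) :=
  ⋂₀ {B | A ⊆ B ∧ B ⊆ uSphere n ∧ SphConvex B}

/-- The set `C` of pairs of proper convex bodies contained in a common open hemisphere. -/
def pairsC (n : ℕ) : Set (Set (Esp n) × Set (Esp n)) :=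
  {p | ∃ u : Esp n, ‖u‖ = 1 ∧ p.1 ∈ properBodies u ∧ p.2 ∈ properBodies u}

/-- `u`-projection covariance of a binary operation on `K_u^p(S^n)`:
`(K|S) * (L|S) = (K*L)|S` for all great subspheres `S = V ∩ S^n` through `u`
with `0 ≤ k = dim S ≤ n − 1`. -/
def uProjCovariant {n : ℕ} (u : Esp n)
    (op : Set (Esp n) → Set (Esp n) → Set (Esp n)) : Prop :=
  ∀ V : Submodule ℝ (Esp n), u ∈ V → Module.finrank ℝ V ≤ n →
    ∀ K ∈ properBodies u, ∀ L ∈ properBodies u,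
      op (sphProj V K) (sphProj V L) = sphProj V (op K L)

/-- Projection covariance: `u`-projection covariance for every `u ∈ S^n`. -/
def projCovariantC {n : ℕ} (op : Set (Esp n) → Set (Esp n) → Set (Esp n)) : Prop :=
  ∀ u : Esp n, ‖u‖ = 1 → uProjCovariant u op

/-- Projection covariance for operations on compact convex subsets of `u^⊥`. -/
def eProjCovariant {n : ℕ} (u : Esp n)
    (op : Set (Esp n) → Set (Esp n) → Set (Esp n)) : Prop :=
  ∀ W : Submodule ℝ (Esp n), (W : Set (Esp n)) ⊆ hyper u →
    ∀ K ∈ cptCvx u, ∀ L ∈ cptCvx u,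
      op (eProj W K) (eProj W L) = eProj W (op K L)


section Aux

variable {n : ℕ}

lemma inner_self_one {u : Esp n} (hu : ‖u‖ = 1) : ⟪u, u⟫ = 1 := by
  rw [real_inner_self_eq_norm_sq, hu]; norm_num

lemma sign_arccos_eq_arctan {c s : ℝ} (hc : 0 < c) :
    Real.sign s * Real.arccos (c / Real.sqrt (c ^ 2 + s ^ 2)) = Real.arctan (s / c) := by
  have hd : 0 < Real.sqrt (c ^ 2 + s ^ 2) := Real.sqrt_pos.2 (by positivity)
  have hx : 0 < c / Real.sqrt (c ^ 2 + s ^ 2) := div_pos hc hd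
  have hsq : Real.sqrt (c ^ 2 + s ^ 2) ^ 2 = c ^ 2 + s ^ 2 := Real.sq_sqrt (by positivity)
  have h1 : Real.sqrt (1 - (c / Real.sqrt (c ^ 2 + s ^ 2)) ^ 2)
      = |s| / Real.sqrt (c ^ 2 + s ^ 2) := by
    have he : 1 - (c / Real.sqrt (c ^ 2 + s ^ 2)) ^ 2
        = (|s| / Real.sqrt (c ^ 2 + s ^ 2)) ^ 2 := by
      rw [div_pow, div_pow, hsq, sq_abs]
      field_simp
      ring
    rw [he, Real.sqrt_sq (by positivity)]
  have h2 : Real.arccos (c / Real.sqrt (c ^ 2 + s ^ 2)) = Real.arctan (|s| / c) := by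
    rw [Real.arccos_eq_arctan hx, h1]
    congr 1
    field_simp
  rcases lt_trichotomy s 0 with hs | hs | hs
  · rw [h2, Real.sign_of_neg hs, abs_of_neg hs, neg_div, Real.arctan_neg]; ring
  · subst hs; simp
  · rw [h2, Real.sign_of_pos hs, abs_of_pos hs, one_mul]

lemma inner_gno_eq {u v : Esp n} (w : Esp n) (hv : ⟪u, v⟫ = 0) :
    ⟪v, gno u w⟫ = ⟪v, w⟫ / ⟪u, w⟫ := by
  have hvu : ⟪v, u⟫ = 0 := by rw [real_inner_comm]; exact hv
  rw [gno, inner_sub_right, real_inner_smul_right, hvu, sub_zero, div_eq_inv_mul]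

lemma properBodies_compact {u : Esp n} {K : Set (Esp n)} (hK : K ∈ properBodies u) :
    IsCompact K := by
  refine Metric.isCompact_of_isClosed_isBounded hK.2.1 ?_
  refine (Metric.isBounded_closedBall (x := (0 : Esp n)) (r := 1)).subset ?_
  intro w hw
  have h1 := (hK.2.2.1 hw).1
  simp [Metric.mem_closedBall, dist_zero_right, h1.le]

lemma gno_image_eq {u : Esp n} (hu : ‖u‖ = 1) {K : Set (Esp n)} (hKh : K ⊆ openHemi u) :
    gno u '' K = {x | ⟪u, x⟫ = 0 ∧ x + u ∈ radSet K} := by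
  have huu : ⟪u, u⟫ = 1 := inner_self_one hu
  ext x
  constructor
  · rintro ⟨w, hw, rfl⟩
    have hpos : 0 < ⟪u, w⟫ := (hKh hw).2
    refine ⟨?_, ⟪u, w⟫⁻¹, (inv_pos.2 hpos).le, w, hw, ?_⟩
    · rw [gno, inner_sub_right, real_inner_smul_right, huu, inv_mul_cancel₀ hpos.ne', sub_self]
    · simp [gno]
  · rintro ⟨hx, l, hl, w, hw, hxu⟩
    have h1 : l * ⟪u, w⟫ = 1 := by
      have h2 : ⟪u, x + u⟫ = l * ⟪u, w⟫ := by rw [hxu, real_inner_smul_right]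
      rw [inner_add_right, hx, huu] at h2
      linarith
    have hinv : ⟪u, w⟫⁻¹ = l := inv_eq_of_mul_eq_one_left h1
    exact ⟨w, hw, by rw [gno, hinv, ← hxu]; abel⟩

lemma hyper_isClosed (u : Esp n) : IsClosed (hyper u) :=
  IsClosed.preimage (Continuous.inner continuous_const continuous_id) isClosed_singleton

lemma hyper_convex (u : Esp n) : Convex ℝ (hyper u) :=
  convex_hyperplane ⟨fun x y => inner_add_right _ _ _,
    fun c x => by rw [real_inner_smul_right, smul_eq_mul]⟩ 0

lemma gno_image_props {u : Esp n} (hu : ‖u‖ = 1) {K : Set (Esp n)}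
    (hK : K ∈ properBodies u) :
    (gno u '' K).Nonempty ∧ IsCompact (gno u '' K) ∧ Convex ℝ (gno u '' K) ∧
      gno u '' K ⊆ hyper u := by
  obtain ⟨hKne, hKcl, hKh, hKc⟩ := hK
  have hcpt := properBodies_compact (u := u) ⟨hKne, hKcl, hKh, hKc⟩
  refine ⟨hKne.image _, ?_, ?_, ?_⟩
  · refine hcpt.image_of_continuousOn ?_
    refine ContinuousOn.sub (ContinuousOn.fun_smul ?_ (continuousOn_id' _)) continuousOn_const
    exact ((Continuous.inner continuous_const continuous_id).continuousOn).inv₀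
      fun w hw => (hKh hw).2.ne'
  · rw [gno_image_eq hu hKh]
    have h2 : Convex ℝ {x : Esp n | x + u ∈ radSet K} := by
      intro x hx y hy a b ha hb hab
      have key : a • x + b • y + u = a • (x + u) + b • (y + u) := by
        have h3 : a • u + b • u = u := by rw [← add_smul, hab, one_smul]
        conv_lhs => rw [← h3]
        rw [smul_add, smul_add]; abel
      show a • x + b • y + u ∈ radSet K
      rw [key]
      exact hKc hx hy ha hb hab
    exact fun x hx y hy a b ha hb hab =>
      ⟨hyper_convex u hx.1 hy.1 ha hb hab, h2 hx.2 hy.2 ha hb hab⟩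
  · rw [gno_image_eq hu hKh]
    exact fun x hx => hx.1

lemma tan_sphSupp {u : Esp n} (hu : ‖u‖ = 1) {K : Set (Esp n)}
    (hK : K ∈ properBodies u) {v : Esp n} (hv : v ∈ equator u) :
    Real.tan (sphSupp u K v) = esupp (gno u '' K) v := by
  obtain ⟨hKne, hKcl, hKh, hKc⟩ := hK
  have hcpt := properBodies_compact (u := u) ⟨hKne, hKcl, hKh, hKc⟩
  set g : Esp n → ℝ := fun w => ⟪v, w⟫ / ⟪u, w⟫ with hg
  have himg1 : (fun w => Real.sign ⟪v, w⟫ *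
      Real.arccos (⟪u, w⟫ / Real.sqrt (⟪u, w⟫ ^ 2 + ⟪v, w⟫ ^ 2))) '' K
      = Real.arctan '' (g '' K) := by
    rw [← Set.image_comp]
    exact Set.image_congr fun w hw => sign_arccos_eq_arctan (hKh hw).2
  have himg2 : (fun y => ⟪v, y⟫) '' (gno u '' K) = g '' K := by
    rw [← Set.image_comp]
    exact Set.image_congr fun w _ => inner_gno_eq w hv.2
  have hScpt : IsCompact (g '' K) := hcpt.image_of_continuousOn
    (ContinuousOn.div ((Continuous.inner continuous_const continuous_id).continuousOn)
      ((Continuous.inner continuous_const continuous_id).continuousOn)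
      fun w hw => (hKh hw).2.ne')
  have hSne : (g '' K).Nonempty := hKne.image _
  have hmem : sSup (g '' K) ∈ g '' K := hScpt.sSup_mem hSne
  have hgr : IsGreatest (Real.arctan '' (g '' K)) (Real.arctan (sSup (g '' K))) := by
    constructor
    · exact Set.mem_image_of_mem _ hmem
    · rintro _ ⟨y, hy, rfl⟩
      exact Real.arctan_strictMono.monotone (le_csSup hScpt.bddAbove hy)
  rw [sphSupp, himg1, hgr.csSup_eq, Real.tan_arctan, esupp, himg2]

lemma equator_nonempty (hn : 2 ≤ n) (u : Esp n) (hu : ‖u‖ = 1) :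
    (equator u).Nonempty := by
  have hune : u ≠ 0 := by
    intro h; rw [h, norm_zero] at hu; norm_num at hu
  have hspan : (ℝ ∙ u) ≠ ⊤ := by
    intro h
    have h1 : Module.finrank ℝ (ℝ ∙ u : Submodule ℝ (Esp n)) = 1 := finrank_span_singleton hune
    have h2 : Module.finrank ℝ (Esp n) = n + 1 := finrank_euclideanSpace_fin
    rw [h, finrank_top] at h1
    omega
  have hbot : (ℝ ∙ u)ᗮ ≠ ⊥ := fun h => hspan (Submodule.orthogonal_eq_bot_iff.1 h)
  obtain ⟨w, hw, hwne⟩ := (Submodule.ne_bot_iff _).1 hbot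
  refine ⟨‖w‖⁻¹ • w, ?_, ?_⟩
  · rw [norm_smul, norm_inv, norm_norm, inv_mul_cancel₀ (norm_ne_zero_iff.2 hwne)]
  · show ⟪u, ‖w‖⁻¹ • w⟫ = 0
    rw [real_inner_smul_right,
      (Submodule.mem_orthogonal _ _).1 hw u (Submodule.mem_span_singleton_self u), mul_zero]

lemma esupp_le_add_haus {A B : Set (Esp n)} (hA : A.Nonempty) (hB : B.Nonempty)
    (hAc : IsCompact A) (hBc : IsCompact B) {v : Esp n} (hv : ‖v‖ = 1) :
    esupp A v ≤ esupp B v + Metric.hausdorffDist A B := by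
  have hne : EMetric.hausdorffEdist A B ≠ ⊤ :=
    Metric.hausdorffEdist_ne_top_of_nonempty_of_bounded hA hB hAc.isBounded hBc.isBounded
  refine csSup_le (hA.image _) ?_
  rintro _ ⟨a, ha, rfl⟩
  obtain ⟨b, hb, hab⟩ := hBc.exists_infDist_eq_dist hB a
  have h1 : dist a b ≤ Metric.hausdorffDist A B := by
    rw [← hab]; exact Metric.infDist_le_hausdorffDist_of_mem ha hne
  have h2 : ⟪v, a⟫ - ⟪v, b⟫ ≤ dist a b := by
    have h3 : ⟪v, a - b⟫ ≤ ‖v‖ * ‖a - b‖ := real_inner_le_norm _ _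
    rw [inner_sub_right] at h3
    rw [dist_eq_norm]
    calc ⟪v, a⟫ - ⟪v, b⟫ ≤ ‖v‖ * ‖a - b‖ := h3
      _ = ‖a - b‖ := by rw [hv, one_mul]
  have h3 : ⟪v, b⟫ ≤ esupp B v :=
    le_csSup (hBc.image (Continuous.inner continuous_const continuous_id)).bddAbove
      (Set.mem_image_of_mem _ hb)
  show ⟪v, a⟫ ≤ _
  linarith

lemma haus_eq_sup (hn : 2 ≤ n) (u : Esp n) (hu : ‖u‖ = 1)
    {A B : Set (Esp n)} (hA : A.Nonempty) (hAc : IsCompact A) (hAv : Convex ℝ A)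
    (hAh : A ⊆ hyper u)
    (hB : B.Nonempty) (hBc : IsCompact B) (hBv : Convex ℝ B) (hBh : B ⊆ hyper u) :
    Metric.hausdorffDist A B = sSup ((fun v => |esupp A v - esupp B v|) '' equator u) := by
  set δ := Metric.hausdorffDist A B with hδ
  have habs : ∀ v ∈ equator u, |esupp A v - esupp B v| ≤ δ := by
    intro v hv
    rw [abs_sub_le_iff]
    constructor
    · have := esupp_le_add_haus hA hB hAc hBc hv.1; linarith
    · have := esupp_le_add_haus hB hA hBc hAc hv.1
      rw [Metric.hausdorffDist_comm] at this; linarith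
  obtain ⟨v₀, hv₀⟩ := equator_nonempty hn u hu
  have hbdd : BddAbove ((fun v => |esupp A v - esupp B v|) '' equator u) :=
    ⟨δ, by rintro _ ⟨v, hv, rfl⟩; exact habs v hv⟩
  set r := sSup ((fun v => |esupp A v - esupp B v|) '' equator u) with hr
  have hrle : ∀ v ∈ equator u, |esupp A v - esupp B v| ≤ r :=
    fun v hv => le_csSup hbdd (Set.mem_image_of_mem _ hv)
  have hr0 : 0 ≤ r := le_trans (abs_nonneg _) (hrle v₀ hv₀)
  have key : ∀ C D : Set (Esp n), C.Nonempty → IsCompact C → C ⊆ hyper u →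
      D.Nonempty → IsCompact D → Convex ℝ D → D ⊆ hyper u →
      (∀ v ∈ equator u, esupp C v ≤ esupp D v + r) →
      ∀ a ∈ C, ∃ b ∈ D, dist a b ≤ r := by
    intro C D hC hCc hCh hD hDc hDv hDh hsupp a ha
    set Dset := Metric.closedBall (0 : Esp n) r ∩ hyper u with hDset
    have hDcpt : IsCompact Dset := (isCompact_closedBall _ _).inter_right (hyper_isClosed u)
    have hDcv : Convex ℝ Dset := (convex_closedBall _ _).inter (hyper_convex u)
    set S := D + Dset with hSdef
    have hScpt : IsCompact S := hDc.add hDcpt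
    have hScv : Convex ℝ S := hDv.add hDcv
    by_contra hcon
    push_neg at hcon
    have haS : a ∉ S := by
      intro hmem
      rw [Set.mem_add] at hmem
      obtain ⟨b, hb, d, hd, hbd⟩ := hmem
      have h4 : a - b = d := by rw [← hbd]; abel
      have h5 : dist a b ≤ r := by
        rw [dist_eq_norm, h4]
        exact mem_closedBall_zero_iff.1 hd.1
      exact absurd h5 (not_le.2 (hcon b hb))
    obtain ⟨f, s', hfs, hfa⟩ := geometric_hahn_banach_closed_point hScv hScpt.isClosed haS
    set y := (InnerProductSpace.toDual ℝ (Esp n)).symm f with hy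
    have hyf : ∀ x : Esp n, ⟪y, x⟫ = f x := fun x => InnerProductSpace.toDual_symm_apply
    set y' := y - ⟪u, y⟫ • u with hy'
    have huy' : ⟪u, y'⟫ = 0 := by
      rw [hy', inner_sub_right, real_inner_smul_right, inner_self_one hu]; ring
    have hy'f : ∀ x : Esp n, ⟪u, x⟫ = 0 → ⟪y', x⟫ = f x := by
      intro x hx
      rw [hy', inner_sub_left, real_inner_smul_left, hx, mul_zero, sub_zero, hyf]
    have hS_hyper : S ⊆ hyper u := by
      intro z hz
      rw [Set.mem_add] at hz
      obtain ⟨b, hb, d, hd, hbd⟩ := hz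
      show ⟪u, z⟫ = 0
      rw [← hbd, inner_add_right, hDh hb, hd.2, add_zero]
    have h0D : (0 : Esp n) ∈ Dset :=
      ⟨by simpa [Metric.mem_closedBall] using hr0, by show ⟪u, (0:Esp n)⟫ = 0; simp⟩
    have hy'ne : y' ≠ 0 := by
      intro h0
      obtain ⟨b, hb⟩ := hD
      have h0S : b + 0 ∈ S := Set.add_mem_add hb h0D
      have e1 : f (b + 0) = 0 := by rw [← hy'f _ (hS_hyper h0S), h0]; simp
      have e2 : f a = 0 := by rw [← hy'f _ (hCh ha), h0]; simp
      have h6 := hfs _ h0S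
      rw [e1] at h6
      rw [e2] at hfa
      linarith
    have hy'pos : 0 < ‖y'‖ := norm_pos_iff.2 hy'ne
    set v := ‖y'‖⁻¹ • y' with hv
    have hveq : v ∈ equator u :=
      ⟨by rw [hv, norm_smul, norm_inv, norm_norm, inv_mul_cancel₀ hy'pos.ne'],
       by show ⟪u, v⟫ = 0; rw [hv, real_inner_smul_right, huy', mul_zero]⟩
    have hvv : ⟪v, v⟫ = 1 := inner_self_one hveq.1
    have hinner : ∀ x : Esp n, ⟪u, x⟫ = 0 → f x = ‖y'‖ * ⟪v, x⟫ := by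
      intro x hx
      rw [← hy'f x hx, hv, real_inner_smul_left]
      field_simp
    obtain ⟨b₀, hb₀, hmax⟩ := hDc.exists_isMaxOn hD
      ((Continuous.inner continuous_const continuous_id).continuousOn :
        ContinuousOn (fun z : Esp n => ⟪v, z⟫) D)
    have hsuppD : esupp D v = ⟪v, b₀⟫ :=
      IsGreatest.csSup_eq ⟨Set.mem_image_of_mem _ hb₀,
        by rintro _ ⟨z, hz, rfl⟩; exact hmax hz⟩
    have hrv : r • v ∈ Dset := by
      refine ⟨?_, ?_⟩
      · rw [Metric.mem_closedBall, dist_zero_right, norm_smul, hveq.1]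
        simp [abs_of_nonneg hr0]
      · show ⟪u, r • v⟫ = 0
        rw [real_inner_smul_right, hveq.2, mul_zero]
    have hmem : b₀ + r • v ∈ S := Set.add_mem_add hb₀ hrv
    have e1 : f (b₀ + r • v) = ‖y'‖ * (⟪v, b₀⟫ + r) := by
      rw [hinner _ (hS_hyper hmem), inner_add_right, real_inner_smul_right, hvv, mul_one]
    have e2 : f a = ‖y'‖ * ⟪v, a⟫ := hinner _ (hCh ha)
    have h3 : ⟪v, b₀⟫ + r < ⟪v, a⟫ := by
      have h7 := lt_trans (hfs _ hmem) hfa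
      rw [e1, e2] at h7
      exact (mul_lt_mul_iff_right₀ hy'pos).1 h7
    have h4 : ⟪v, a⟫ ≤ esupp C v :=
      le_csSup (hCc.image (Continuous.inner continuous_const continuous_id)).bddAbove
        (Set.mem_image_of_mem _ ha)
    have h5 := hsupp v hveq
    rw [hsuppD] at h5
    linarith
  refine le_antisymm ?_ ?_
  · refine Metric.hausdorffDist_le_of_mem_dist hr0 ?_ ?_
    · exact key A B hA hAc hAh hB hBc hBv hBh
        (fun v hv => by have h := hrle v hv; rw [abs_sub_le_iff] at h; linarith [h.1])
    · exact key B A hB hBc hBh hA hAc hAv hAh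
        (fun v hv => by have h := hrle v hv; rw [abs_sub_le_iff] at h; linarith [h.2])
  · exact csSup_le ((equator_nonempty hn u hu).image _)
      (by rintro _ ⟨v, hv, rfl⟩; exact habs v hv)

end Aux

/-- For `K, L ∈ K_u^p(S^n)`, the Euclidean Hausdorff distance of the
gnomonic images satisfies
`δ(g_u(K), g_u(L)) = max_{v ∈ S_u} |tan h_u(K,v) − tan h_u(L,v)|`. -/
theorem stmt7 {n : ℕ} (hn : 2 ≤ n) (u : Esp n) (hu : ‖u‖ = 1)
    (K L : Set (Esp n)) (hK : K ∈ properBodies u) (hL : L ∈ properBodies u) :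
    Metric.hausdorffDist (gno u '' K) (gno u '' L) =
      sSup ((fun v => |Real.tan (sphSupp u K v) - Real.tan (sphSupp u L v)|) ''
        equator u) := by
  obtain ⟨hA1, hA2, hA3, hA4⟩ := gno_image_props hu hK
  obtain ⟨hB1, hB2, hB3, hB4⟩ := gno_image_props hu hL
  have himg : (fun v => |Real.tan (sphSupp u K v) - Real.tan (sphSupp u L v)|) '' equator u
      = (fun v => |esupp (gno u '' K) v - esupp (gno u '' L) v|) '' equator u :=
    Set.image_congr fun v hv => by rw [tan_sphSupp hu hK hv, tan_sphSupp hu hL hv]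
  rw [himg]
  exact haus_eq_sup hn u hu hA1 hA2 hA3 hA4 hB1 hB2 hB3 hB4
end
end

section
/- Let M ⊆ R^4 be a nonempty closed convex set whose support function satisfies h_M(a,b,c,d) ≤ max{b,d} for all real a,b,c,d with −a ≤ b and −c ≤ d. Then M ⊆ E := {(λ₂, λ₁+λ₂, λ₃, 1−λ₁+λ₃) : λ₁ ∈ [0,1], λ₂ ≤ 0, λ₃ ≤ 0}. -/
open scoped RealInnerProductSpace Pointwise
open Real

noncomputable section

/-- If `M ⊆ ℝ^4` is nonempty, closed and convex, and its support
function satisfies `h_M(a,b,c,d) ≤ max {b,d}` whenever `−a ≤ b` and `−c ≤ d`, then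
`M ⊆ E = {(λ₂, λ₁+λ₂, λ₃, 1−λ₁+λ₃) : λ₁ ∈ [0,1], λ₂ ≤ 0, λ₃ ≤ 0}`. -/
theorem stmt12 (M : Set (Fin 4 → ℝ)) (hne : M.Nonempty) (hcl : IsClosed M)
    (hcv : Convex ℝ M)
    (h : ∀ a b c d : ℝ, -a ≤ b → -c ≤ d → ∀ y ∈ M,
      a * y 0 + b * y 1 + c * y 2 + d * y 3 ≤ max b d) :
    M ⊆ {y | ∃ l1 l2 l3 : ℝ, l1 ∈ Set.Icc (0 : ℝ) 1 ∧ l2 ≤ 0 ∧ l3 ≤ 0 ∧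
      y 0 = l2 ∧ y 1 = l1 + l2 ∧ y 2 = l3 ∧ y 3 = 1 - l1 + l3} := by
  intro y hy
  have h1 := h 1 0 0 0 (by norm_num) (by norm_num) y hy
  have h2 := h 0 0 1 0 (by norm_num) (by norm_num) y hy
  have h3 := h 1 (-1) 0 0 (by norm_num) (by norm_num) y hy
  have h4 := h (-1) 1 0 0 (by norm_num) (by norm_num) y hy
  have h5 := h (-1) 1 (-1) 1 (by norm_num) (by norm_num) y hy
  have h6 := h 1 (-1) 1 (-1) (by norm_num) (by norm_num) y hy
  norm_num at h1 h2 h3 h4 h5 h6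
  exact ⟨y 1 - y 0, y 0, y 2, ⟨by linarith, by linarith⟩, by linarith, by linarith,
    rfl, by ring, rfl, by linarith⟩
end
end

section
/- The convex set E = {(λ₂, λ₁+λ₂, λ₃, 1−λ₁+λ₃) : λ₁ ∈ [0,1], λ₂ ≤ 0, λ₃ ≤ 0} ⊆ R^4 satisfies h_E(h_{−K}(x), h_K(x), h_{−L}(x), h_L(x)) = h_{conv(K ∪ L)}(x) for all compact convex sets K, L ⊆ R^n and all x ∈ R^n. -/
open scoped RealInnerProductSpace Pointwise
open Real

noncomputable section

/-- The set `E = {(λ₂, λ₁+λ₂, λ₃, 1−λ₁+λ₃) : λ₁ ∈ [0,1], λ₂ ≤ 0, λ₃ ≤ 0} ⊆ ℝ^4`. -/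
def Eset : Set (Fin 4 → ℝ) :=
  {y | ∃ l1 l2 l3 : ℝ, l1 ∈ Set.Icc (0 : ℝ) 1 ∧ l2 ≤ 0 ∧ l3 ≤ 0 ∧
    y = ![l2, l1 + l2, l3, 1 - l1 + l3]}

/-- Euclidean support function of a subset of `ℝ^m`. -/
def es {m : ℕ} (C : Set (EuclideanSpace ℝ (Fin m))) (x : EuclideanSpace ℝ (Fin m)) : ℝ :=
  sSup ((fun y => ⟪x, y⟫) '' C)

private lemma es_bdd {m : ℕ} {C : Set (EuclideanSpace ℝ (Fin m))} (hC : IsCompact C)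
    (x : EuclideanSpace ℝ (Fin m)) : BddAbove ((fun y => ⟪x, y⟫) '' C) :=
  (hC.image (continuous_const.inner continuous_id)).bddAbove

private lemma le_es {m : ℕ} {C : Set (EuclideanSpace ℝ (Fin m))} (hC : IsCompact C)
    {x z : EuclideanSpace ℝ (Fin m)} (hz : z ∈ C) : ⟪x, z⟫ ≤ es C x :=
  le_csSup (es_bdd hC x) ⟨z, hz, rfl⟩

/-- For all compact convex bodies `K, L ⊆ ℝ^m` and all `x`:
`h_E(h_{−K}(x), h_K(x), h_{−L}(x), h_L(x)) = h_{conv(K ∪ L)}(x)`. -/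
theorem stmt13 {m : ℕ} (K L : Set (EuclideanSpace ℝ (Fin m)))
    (hK : K.Nonempty) (hKc : IsCompact K) (hKv : Convex ℝ K)
    (hL : L.Nonempty) (hLc : IsCompact L) (hLv : Convex ℝ L)
    (x : EuclideanSpace ℝ (Fin m)) :
    sSup ((fun y => es (-K) x * y 0 + es K x * y 1 + es (-L) x * y 2 + es L x * y 3) ''
        Eset) =
      es (convexHull ℝ (K ∪ L)) x := by
  obtain ⟨zK, hzK⟩ := hK
  obtain ⟨zL, hzL⟩ := hL
  set a := es (-K) x with ha
  set b := es K x with hb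
  set c := es (-L) x with hc
  set d := es L x with hd
  have hab : 0 ≤ a + b := by
    have h1 : ⟪x, -zK⟫ ≤ a := le_es hKc.neg (Set.neg_mem_neg.mpr hzK)
    have h2 : ⟪x, zK⟫ ≤ b := le_es hKc hzK
    rw [inner_neg_right] at h1; linarith
  have hcd : 0 ≤ c + d := by
    have h1 : ⟪x, -zL⟫ ≤ c := le_es hLc.neg (Set.neg_mem_neg.mpr hzL)
    have h2 : ⟪x, zL⟫ ≤ d := le_es hLc hzL
    rw [inner_neg_right] at h1; linarith
  have hbound : ∀ v ∈ ((fun y => a * y 0 + b * y 1 + c * y 2 + d * y 3) '' Eset),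
      v ≤ max b d := by
    rintro v ⟨y, ⟨l1, l2, l3, hl1, hl2, hl3, rfl⟩, rfl⟩
    simp only [Matrix.cons_val_zero, Matrix.cons_val_one, Matrix.head_cons,
      Matrix.cons_val_two, Matrix.tail_cons, Matrix.cons_val_three]
    have e1 : l2 * (a + b) ≤ 0 := mul_nonpos_of_nonpos_of_nonneg hl2 hab
    have e2 : l3 * (c + d) ≤ 0 := mul_nonpos_of_nonpos_of_nonneg hl3 hcd
    have e3 : l1 * b ≤ l1 * max b d := mul_le_mul_of_nonneg_left (le_max_left b d) hl1.1
    have e4 : (1 - l1) * d ≤ (1 - l1) * max b d :=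
      mul_le_mul_of_nonneg_left (le_max_right b d) (by linarith [hl1.2])
    nlinarith [hl1.1, hl1.2]
  have hhull : ∀ z ∈ convexHull ℝ (K ∪ L), ⟪x, z⟫ ≤ max b d := by
    intro z hz
    have hmemK : ∀ z ∈ K ∪ L, z ∈ {y : EuclideanSpace ℝ (Fin m) | ⟪x, y⟫ ≤ max b d} := by
      rintro z (hz | hz)
      · exact le_trans (le_es hKc hz) (le_max_left b d)
      · exact le_trans (le_es hLc hz) (le_max_right b d)
    have hcvx : Convex ℝ {y : EuclideanSpace ℝ (Fin m) | ⟪x, y⟫ ≤ max b d} := by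
      intro p hp q hq s t hs ht hst
      simp only [Set.mem_setOf_eq] at *
      rw [inner_add_right, real_inner_smul_right, real_inner_smul_right]
      have hM : (s + t) * max b d = max b d := by rw [hst, one_mul]
      nlinarith [mul_le_mul_of_nonneg_left hp hs, mul_le_mul_of_nonneg_left hq ht]
    exact convexHull_min hmemK hcvx hz
  have hhull_bdd : BddAbove ((fun y => ⟪x, y⟫) '' convexHull ℝ (K ∪ L)) := by
    refine ⟨max b d, ?_⟩
    rintro v ⟨z, hz, rfl⟩
    exact hhull z hz
  have hRHS : es (convexHull ℝ (K ∪ L)) x = max b d := by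
    apply le_antisymm
    · apply csSup_le (Set.Nonempty.image _ ⟨zK, subset_convexHull ℝ _ (Or.inl hzK)⟩)
      rintro v ⟨z, hz, rfl⟩
      exact hhull z hz
    · refine max_le ?_ ?_
      · exact csSup_le_csSup hhull_bdd ⟨⟪x, zK⟫, zK, hzK, rfl⟩
          (Set.image_mono fun z hz => subset_convexHull ℝ _ (Or.inl hz))
      · exact csSup_le_csSup hhull_bdd ⟨⟪x, zL⟫, zL, hzL, rfl⟩
          (Set.image_mono fun z hz => subset_convexHull ℝ _ (Or.inr hz))
  rw [hRHS]
  apply le_antisymm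
  · apply csSup_le
    · exact ⟨_, ⟨![0, 0, 0, 1], ⟨0, 0, 0, by norm_num⟩, rfl⟩⟩
    · exact hbound
  · have hbdd : BddAbove ((fun y => a * y 0 + b * y 1 + c * y 2 + d * y 3) '' Eset) :=
      ⟨max b d, hbound⟩
    rcases le_total d b with h | h
    · rw [max_eq_left h]
      exact le_csSup hbdd ⟨![0, 1, 0, 0], ⟨1, 0, 0, by norm_num⟩, by norm_num [Matrix.cons_val_two, Matrix.cons_val_three, Matrix.tail_cons, Matrix.head_cons]⟩
    · rw [max_eq_right h]
      exact le_csSup hbdd ⟨![0, 0, 0, 1], ⟨0, 0, 0, by norm_num⟩, by norm_num [Matrix.cons_val_two, Matrix.cons_val_three, Matrix.tail_cons, Matrix.head_cons]⟩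
end
end
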